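/- Let q > 3 be a prime power and let G = SL(2, F_q). Then there exist elements x, y, u ∈ G with u ≠ 1 such that [x u x⁻¹, y u y⁻¹] = u. (Equivalently, the verbal dynamical system D₁ given by the self-map (x,y,u) ↦ (x, y, [x u x⁻¹, y u y⁻¹]) of G³ has a fixed point outside the forbidden set G × G × {1}.) -/

import Mathlib

open Matrix Polynomial

open scoped commutatorElement

namespace Stmt0Aux

variable {F : Type*} [Field F] [Fintype F]

private lemma exists_ne_zero_ne_one (hq : 2 < Fintype.card F) : ∃ x : F, x ≠ 0 ∧ x ≠ 1 := by
  classical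
  by_contra h
  push_neg at h
  have hsub : (Finset.univ : Finset F) ⊆ {0, 1} := by
    intro x _
    by_cases h0 : x = 0
    · simp [h0]
    · simp [h x h0]
  have hle := Finset.card_le_card hsub
  have h2 : ({0, 1} : Finset F).card ≤ 2 :=
    (Finset.card_insert_le _ _).trans (by simp)
  rw [Finset.card_univ] at hle
  omega

private lemma sq_surj_of_char_two (h2 : (2 : F) = 0) (a : F) : ∃ x : F, x ^ 2 = a := by
  have hinj : Function.Injective (fun x : F => x ^ 2) := by
    intro x y hxy
    simp only at hxy
    have hz : (x - y) ^ 2 = 0 := by linear_combination hxy + (y ^ 2 - x * y) * h2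
    have := pow_eq_zero_iff (n := 2) (by norm_num) |>.mp hz
    exact sub_eq_zero.mp this
  exact (Finite.injective_iff_surjective.mp hinj) a

private lemma cube_surj (hno : ¬ ∃ ω : F, ω ^ 2 + ω + 1 = 0) (a : F) : ∃ x : F, x ^ 3 = a := by
  have hinj : Function.Injective (fun x : F => x ^ 3) := by
    intro x y hxy
    simp only at hxy
    by_cases hy : y = 0
    · subst hy
      simpa using pow_eq_zero_iff (n := 3) (by norm_num) |>.mp (by simpa using hxy)
    · have hc : (x * y⁻¹) ^ 3 = 1 := by
        field_simp
        linear_combination hxy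
      have hfac : ((x * y⁻¹) - 1) * ((x * y⁻¹) ^ 2 + (x * y⁻¹) + 1) = 0 := by
        linear_combination hc
      rcases mul_eq_zero.mp hfac with h | h
      · have h1 : x * y⁻¹ = 1 := by
          have := sub_eq_zero.mp h
          exact this
        field_simp at h1
        exact h1
      · exact absurd ⟨x * y⁻¹, h⟩ hno
  exact (Finite.injective_iff_surjective.mp hinj) a

private lemma nonsq_mul_nonsq [DecidableEq F] {a b : F} (ha : ¬ IsSquare a) (hb : ¬ IsSquare b) :
    IsSquare (a * b) := by
  have ha0 : a ≠ 0 := fun h => ha (h ▸ ⟨0, by simp⟩)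
  have hb0 : b ≠ 0 := fun h => hb (h ▸ ⟨0, by simp⟩)
  have hqa : quadraticChar F a = -1 := quadraticChar_neg_one_iff_not_isSquare.mpr ha
  have hqb : quadraticChar F b = -1 := quadraticChar_neg_one_iff_not_isSquare.mpr hb
  have hmul : quadraticChar F (a * b) = 1 := by
    rw [_root_.map_mul, hqa, hqb]; ring
  exact (quadraticChar_one_iff_isSquare (mul_ne_zero ha0 hb0)).mp hmul

private lemma exists_nonroot (f : Polynomial F) (hf : f ≠ 0)
    (hd : f.natDegree < Fintype.card F) : ∃ t : F, f.eval t ≠ 0 := by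
  classical
  by_contra h
  push_neg at h
  have hsub : (Finset.univ : Finset F) ⊆ f.roots.toFinset := by
    intro t _
    rw [Multiset.mem_toFinset, mem_roots hf]
    exact h t
  have hle := Finset.card_le_card hsub
  have hle2 : f.roots.toFinset.card ≤ f.natDegree :=
    (Multiset.toFinset_card_le _).trans f.card_roots'
  rw [Finset.card_univ] at hle
  omega

private lemma exists_conic (hodd : Fintype.card F % 2 = 1) {b c d : F} (hb : b ≠ 0) :
    ∃ x y : F, x ^ 2 + b * y ^ 2 + c * y + d = 0 := by
  obtain ⟨x, y, hxy⟩ := FiniteField.exists_root_sum_quadratic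
    (f := X ^ 2) (g := C b * X ^ 2 + C c * X + C d)
    (degree_X_pow 2) (degree_quadratic hb) hodd
  refine ⟨x, y, ?_⟩
  simp only [eval_add, eval_mul, eval_pow, eval_C, eval_X] at hxy
  linear_combination hxy

private lemma odd_card_of_two_ne_zero (h2 : (2 : F) ≠ 0) : Fintype.card F % 2 = 1 := by
  apply FiniteField.odd_card_of_char_ne_two
  intro h
  apply h2
  haveI := ringChar.charP F
  have : ((2 : ℕ) : F) = 0 := (CharP.cast_eq_zero_iff F (ringChar F) 2).mpr (by rw [h])
  simpa using this

def Cmat (s : F) : Matrix.SpecialLinearGroup (Fin 2) F :=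
  ⟨!![0, -1; 1, s], by simp [Matrix.det_fin_two_of]⟩

private lemma conj_to_Cmat (M : Matrix.SpecialLinearGroup (Fin 2) F) {s : F}
    (htr : (M : Matrix (Fin 2) (Fin 2) F).trace = s) (hs : s ^ 2 - 4 ≠ 0) :
    ∃ P : Matrix.SpecialLinearGroup (Fin 2) F, M = P * Cmat s * P⁻¹ := by
  classical
  set a := (M : Matrix (Fin 2) (Fin 2) F) 0 0 with ha
  set b := (M : Matrix (Fin 2) (Fin 2) F) 0 1 with hb
  set c := (M : Matrix (Fin 2) (Fin 2) F) 1 0 with hc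
  set d := (M : Matrix (Fin 2) (Fin 2) F) 1 1 with hd
  have hdet : a * d - b * c = 1 := by
    have := M.2
    rwa [Matrix.det_fin_two] at this
  have htr' : a + d = s := by
    rwa [Matrix.trace_fin_two] at htr
  obtain ⟨vx, vy, hv⟩ : ∃ vx vy : F, c * vx ^ 2 + (d - a) * vx * vy - b * vy ^ 2 = 1 := by
    by_cases hc0 : c = 0
    · by_cases had : d - a = 0
      · exfalso
        apply hs
        linear_combination (-(s + a + d)) * htr' + 4 * hdet + (d - a) * had + 4 * b * hc0
      · refine ⟨(1 + b) / (d - a), 1, ?_⟩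
        rw [hc0]
        field_simp
        ring
    · by_cases h2 : (2 : F) = 0
      · obtain ⟨r, hr⟩ := sq_surj_of_char_two h2 c⁻¹
        refine ⟨r, 0, ?_⟩
        rw [hr]
        field_simp
        ring
      · have hodd := odd_card_of_two_ne_zero h2
        have hb4 : -(s ^ 2 - 4) ≠ 0 := neg_ne_zero.mpr hs
        obtain ⟨X, Y, hXY⟩ := exists_conic hodd (b := -(s ^ 2 - 4)) (c := 0)
          (d := -(4 * c)) hb4
        have h2c : (2 : F) * c ≠ 0 := mul_ne_zero h2 hc0
        set vx := (X - (d - a) * Y) / (2 * c) with hvxdef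
        have hvx : (2 * c) * vx = X - (d - a) * Y := by
          rw [hvxdef]
          field_simp
        refine ⟨vx, Y, ?_⟩
        have hE : (2 * c) * ((2 * c) * (c * vx ^ 2 + (d - a) * vx * Y - b * Y ^ 2)) =
            (2 * c) * ((2 * c) * 1) := by
          linear_combination (c * (2 * c * vx + X - (d - a) * Y) + 2 * c * (d - a) * Y) * hvx +
            c * hXY + (-(c * Y ^ 2 * (a + d + s))) * htr' + (4 * c * Y ^ 2) * hdet
        exact mul_left_cancel₀ h2c (mul_left_cancel₀ h2c hE)
  have hdetP : (!![vx, a * vx + b * vy; vy, c * vx + d * vy] :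
      Matrix (Fin 2) (Fin 2) F).det = 1 := by
    rw [Matrix.det_fin_two_of]; linear_combination hv
  set P : Matrix.SpecialLinearGroup (Fin 2) F := ⟨_, hdetP⟩ with hP
  have key : M * P = P * Cmat s := by
    apply Subtype.ext
    show (M : Matrix (Fin 2) (Fin 2) F) * !![vx, a * vx + b * vy; vy, c * vx + d * vy] =
      !![vx, a * vx + b * vy; vy, c * vx + d * vy] * !![0, -1; 1, s]
    have hM : (M : Matrix (Fin 2) (Fin 2) F) = !![a, b; c, d] := by
      rw [ha, hb, hc, hd]; exact Matrix.eta_fin_two _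
    rw [hM, Matrix.mul_fin_two, Matrix.mul_fin_two, ← Matrix.ext_iff]
    simp only [Fin.forall_fin_two, Fin.isValue, Matrix.of_apply, Matrix.cons_val', Matrix.cons_val_one,
      Matrix.head_cons, Matrix.empty_val', Matrix.cons_val_fin_one, Matrix.cons_val_zero,
      Matrix.head_fin_const]
    refine ⟨⟨by ring, ?_⟩, by ring, ?_⟩
    · linear_combination (vx * a + vy * b) * htr' - vx * hdet
    · linear_combination (c * vx + d * vy) * htr' - vy * hdet
  exact ⟨P, by rw [← eq_mul_inv_of_mul_eq key]⟩

private lemma curve_from_sqrt (h2 : (2 : F) ≠ 0) {s y : F}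
    (hy : y * y = s ^ 4 - 8 * s ^ 2 + 4 * s + 8) :
    ∃ γ : F, γ ^ 2 - s ^ 2 * γ + 2 * s ^ 2 - s - 2 = 0 := by
  refine ⟨(s ^ 2 + y) / 2, ?_⟩
  have hg2 : 2 * ((s ^ 2 + y) / 2) = s ^ 2 + y := by field_simp
  set γ : F := (s ^ 2 + y) / 2 with hγ
  have key : (2 : F) * ((2 : F) * (γ ^ 2 - s ^ 2 * γ + 2 * s ^ 2 - s - 2)) =
      (2 : F) * ((2 : F) * 0) := by
    linear_combination (2 * γ + s ^ 2 + y - 2 * s ^ 2) * hg2 + hy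
  exact mul_left_cancel₀ h2 (mul_left_cancel₀ h2 key)

/-- Existence of a point on the trace curve with `s² ≠ 4`. -/
private lemma exists_point (hq : 3 < Fintype.card F) :
    ∃ s γ : F, γ ^ 2 - s ^ 2 * γ + 2 * s ^ 2 - s - 2 = 0 ∧ s ^ 2 - 4 ≠ 0 := by
  classical
  by_cases h2F : (2 : F) = 0
  · -- characteristic 2
    by_cases hω : ∃ ω : F, ω ^ 2 + ω + 1 = 0
    · obtain ⟨ω, hw⟩ := hω
      have hω0 : ω ≠ 0 := by
        intro h0
        rw [h0] at hw
        simpa using hw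
      refine ⟨ω, ω, ?_, ?_⟩
      · linear_combination (4 - ω) * hw + (-2 * ω - 3) * h2F
      · have h4 : (4 : F) = 0 := by linear_combination 2 * h2F
        intro h
        apply hω0
        have hsq : ω ^ 2 = 0 := by linear_combination h + h4
        exact pow_eq_zero_iff (n := 2) (by norm_num) |>.mp hsq
    · obtain ⟨ξ, hξ0, hξ1⟩ := exists_ne_zero_ne_one (F := F) (by omega)
      have he : ξ ^ 2 + ξ ≠ 0 := by
        intro h
        have : ξ * (ξ + 1) = 0 := by linear_combination h
        rcases mul_eq_zero.mp this with h' | h'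
        · exact hξ0 h'
        · apply hξ1
          linear_combination h' - h2F
      obtain ⟨t, ht3⟩ := cube_surj hω (ξ ^ 2 + ξ)
      have ht0 : t ≠ 0 := by
        intro h0
        rw [h0] at ht3
        exact he (by linear_combination -ht3)
      have hs0 : t⁻¹ ≠ 0 := inv_ne_zero ht0
      refine ⟨t⁻¹, (t⁻¹) ^ 2 * ξ, ?_, ?_⟩
      · have key : (t ^ 4) * ((t⁻¹ ^ 2 * ξ) ^ 2 - (t⁻¹) ^ 2 * (t⁻¹ ^ 2 * ξ) +
            2 * (t⁻¹) ^ 2 - t⁻¹ - 2) = (t ^ 4) * 0 := by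
          have hti : t * t⁻¹ = 1 := mul_inv_cancel₀ ht0
          linear_combination ((ξ ^ 2 - ξ) * (t ^ 3 * t⁻¹ ^ 3 + t ^ 2 * t⁻¹ ^ 2 + t * t⁻¹ + 1) +
            2 * t ^ 2 * (t * t⁻¹ + 1) - t ^ 3) * hti - ht3 + (t ^ 2 - t ^ 4 - ξ) * h2F
        have ht4 : (t ^ 4 : F) ≠ 0 := pow_ne_zero _ ht0
        simpa using mul_left_cancel₀ ht4 key
      · have h4 : (4 : F) = 0 := by linear_combination 2 * h2F
        intro h
        apply hs0
        have hsq : (t⁻¹) ^ 2 = 0 := by linear_combination h + h4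
        exact pow_eq_zero_iff (n := 2) (by norm_num) |>.mp hsq
  · -- odd characteristic
    have h2 : (2 : F) ≠ 0 := h2F
    by_cases h3F : (3 : F) = 0
    · -- characteristic 3
      by_cases hi : ∃ i : F, i ^ 2 = -1
      · obtain ⟨i, hii⟩ := hi
        refine ⟨0, i, ?_, ?_⟩
        · linear_combination hii - h3F
        · intro h
          have h10 : (1 : F) = 0 := by linear_combination -h - h3F
          simpa using h10
      · -- characteristic 3, -1 not a square; card F = 3^n ≥ 9
        have hchar : ringChar F = 3 := by
          haveI := ringChar.charP F
          have hdvd : ringChar F ∣ 3 := by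
            have h3F' : ((3 : ℕ) : F) = 0 := by push_cast; exact h3F
            exact (CharP.cast_eq_zero_iff F (ringChar F) 3).mp h3F'
          rcases (Nat.dvd_prime (by norm_num)).mp hdvd with h | h
          · exact absurd h (CharP.ringChar_ne_one (R := F))
          · exact h
        have hcard : ∃ n : ℕ+, Fintype.card F = 3 ^ (n : ℕ) := by
          haveI : CharP F 3 := hchar ▸ ringChar.charP F
          obtain ⟨n, -, hn⟩ := FiniteField.card F 3
          exact ⟨n, hn⟩
        obtain ⟨n, hn⟩ := hcard
        have hcard9 : 9 ≤ Fintype.card F := by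
          have hn1 : 1 ≤ (n : ℕ) := n.one_le
          by_cases hn2 : (n : ℕ) = 1
          · rw [hn2] at hn
            simp at hn
            omega
          · have h2le : 2 ≤ (n : ℕ) := by omega
            calc (9 : ℕ) = 3 ^ 2 := by norm_num
              _ ≤ 3 ^ (n : ℕ) := Nat.pow_le_pow_right (by norm_num) h2le
              _ = Fintype.card F := hn.symm
        -- find t with (t²+t)³ ≠ t²+t
        obtain ⟨t, htw⟩ : ∃ t : F, (t ^ 2 + t) ^ 3 - (t ^ 2 + t) ≠ 0 := by
          have hdeg : (((Polynomial.X ^ 2 + Polynomial.X) ^ 3 -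
              (Polynomial.X ^ 2 + Polynomial.X) : Polynomial F)).natDegree = 6 := by
            compute_degree!
          have hne0 : (((Polynomial.X ^ 2 + Polynomial.X) ^ 3 -
              (Polynomial.X ^ 2 + Polynomial.X) : Polynomial F)) ≠ 0 := by
            intro h
            rw [h] at hdeg
            simp at hdeg
          obtain ⟨t, ht⟩ := exists_nonroot _ hne0 (by rw [hdeg]; omega)
          refine ⟨t, ?_⟩
          simp only [eval_sub, eval_add, eval_pow, eval_X] at ht
          exact ht
        set w : F := t ^ 2 + t with hwdef
        have hw3 : w ^ 3 - w ≠ 0 := htw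
        have hw0 : w ≠ 0 := by
          intro h; apply hw3; rw [h]; ring
        have hw1 : w - 1 ≠ 0 := by
          intro h; apply hw3
          have hww : w = 1 := by linear_combination h
          rw [hww]; ring
        have hwm1 : w + 1 ≠ 0 := by
          intro h; apply hw3
          have hww : w = -1 := by linear_combination h
          rw [hww]; ring
        have hq0 : (2 * (w + 1) : F) ≠ 0 := mul_ne_zero h2F hwm1
        have hiw : w * w⁻¹ = 1 := mul_inv_cancel₀ hw0
        have hiq : (2 * (w + 1)) * (2 * (w + 1))⁻¹ = 1 := mul_inv_cancel₀ hq0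
        set s₂ : F := w⁻¹ with hs2def
        set s₃ : F := w * (2 * (w + 1))⁻¹ with hs3def
        set R : F := 1 + t + 2 * t ^ 2 + 2 * t ^ 3 + 2 * t ^ 4 + t ^ 5 + 2 * t ^ 6 + t ^ 7
          with hRdef
        set ρ : F := R * (w ^ 2 * (2 * (w + 1)) ^ 2)⁻¹ with hrhodef
        have hwq0 : (w ^ 2 * (2 * (w + 1)) ^ 2 : F) ≠ 0 :=
          mul_ne_zero (pow_ne_zero _ hw0) (pow_ne_zero _ hq0)
        have hiwq : (w ^ 2 * (2 * (w + 1)) ^ 2) * (w ^ 2 * (2 * (w + 1)) ^ 2)⁻¹ = 1 :=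
          mul_inv_cancel₀ hwq0
        have e2 : (s₂ ^ 4 - 8 * s₂ ^ 2 + 4 * s₂ + 8) * w ^ 4 =
            8 * w ^ 4 + 4 * w ^ 3 - 8 * w ^ 2 + 1 := by
          rw [hs2def]
          linear_combination (((w * w⁻¹) ^ 3 + (w * w⁻¹) ^ 2 + (w * w⁻¹) + 1)
            - 8 * w ^ 2 * ((w * w⁻¹) + 1) + 4 * w ^ 3) * hiw
        have e3 : (s₃ ^ 4 - 8 * s₃ ^ 2 + 4 * s₃ + 8) * (2 * (w + 1)) ^ 4 =
            w ^ 4 - 8 * w ^ 2 * (2 * (w + 1)) ^ 2 + 4 * w * (2 * (w + 1)) ^ 3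
              + 8 * (2 * (w + 1)) ^ 4 := by
          rw [hs3def]
          linear_combination (w ^ 4 * (((2 * (w + 1)) * (2 * (w + 1))⁻¹) ^ 3
            + ((2 * (w + 1)) * (2 * (w + 1))⁻¹) ^ 2 + ((2 * (w + 1)) * (2 * (w + 1))⁻¹) + 1)
            - 8 * w ^ 2 * (2 * (w + 1)) ^ 2 * (((2 * (w + 1)) * (2 * (w + 1))⁻¹) + 1)
            + 4 * w * (2 * (w + 1)) ^ 3) * hiq
        have k2 : (8 * w ^ 4 + 4 * w ^ 3 - 8 * w ^ 2 + 1) *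
            (w ^ 4 - 8 * w ^ 2 * (2 * (w + 1)) ^ 2 + 4 * w * (2 * (w + 1)) ^ 3
              + 8 * (2 * (w + 1)) ^ 4) = -(R ^ 2) := by
          rw [hwdef, hRdef]
          linear_combination ((43 : F) + (182 : F) * t + (119 : F) * t ^ 2 + (-1224 : F) * t ^ 3
            + (-4465 : F) * t ^ 4 + (-6618 : F) * t ^ 5 + (400 : F) * t ^ 6
            + (23886 : F) * t ^ 7 + (60693 : F) * t ^ 8 + (94380 : F) * t ^ 9
            + (106539 : F) * t ^ 10 + (91660 : F) * t ^ 11 + (60758 : F) * t ^ 12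
            + (30624 : F) * t ^ 13 + (11255 : F) * t ^ 14 + (2752 : F) * t ^ 15
            + (344 : F) * t ^ 16) * h3F
        have k3 : ρ ^ 2 * (w ^ 4 * (2 * (w + 1)) ^ 4) = R ^ 2 := by
          rw [hrhodef]
          linear_combination (R ^ 2 * ((w ^ 2 * (2 * (w + 1)) ^ 2)
            * (w ^ 2 * (2 * (w + 1)) ^ 2)⁻¹ + 1)) * hiwq
        have hden : (w ^ 4 * (2 * (w + 1)) ^ 4 : F) ≠ 0 :=
          mul_ne_zero (pow_ne_zero _ hw0) (pow_ne_zero _ hq0)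
        have hD23 : (s₂ ^ 4 - 8 * s₂ ^ 2 + 4 * s₂ + 8) * (s₃ ^ 4 - 8 * s₃ ^ 2 + 4 * s₃ + 8)
            = -(ρ ^ 2) := by
          apply mul_right_cancel₀ hden
          have k1 : ((s₂ ^ 4 - 8 * s₂ ^ 2 + 4 * s₂ + 8) * (s₃ ^ 4 - 8 * s₃ ^ 2 + 4 * s₃ + 8))
              * (w ^ 4 * (2 * (w + 1)) ^ 4) =
              (8 * w ^ 4 + 4 * w ^ 3 - 8 * w ^ 2 + 1) *
              (w ^ 4 - 8 * w ^ 2 * (2 * (w + 1)) ^ 2 + 4 * w * (2 * (w + 1)) ^ 3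
                + 8 * (2 * (w + 1)) ^ 4) := by
            linear_combination ((s₃ ^ 4 - 8 * s₃ ^ 2 + 4 * s₃ + 8) * (2 * (w + 1)) ^ 4) * e2
              + (8 * w ^ 4 + 4 * w ^ 3 - 8 * w ^ 2 + 1) * e3
          linear_combination k1 + k2 + k3
        have hem : IsSquare (s₂ ^ 4 - 8 * s₂ ^ 2 + 4 * s₂ + 8) ∨
            IsSquare (s₃ ^ 4 - 8 * s₃ ^ 2 + 4 * s₃ + 8) := by
          by_contra hcon
          push_neg at hcon
          obtain ⟨hn2, hn3⟩ := hcon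
          have hsq := nonsq_mul_nonsq hn2 hn3
          rw [hD23] at hsq
          have hρ0 : ρ ≠ 0 := by
            intro h
            have hzz : (s₂ ^ 4 - 8 * s₂ ^ 2 + 4 * s₂ + 8) *
                (s₃ ^ 4 - 8 * s₃ ^ 2 + 4 * s₃ + 8) = 0 := by
              rw [hD23, h]; ring
            rcases mul_eq_zero.mp hzz with h' | h'
            · exact hn2 (h' ▸ ⟨0, by simp⟩)
            · exact hn3 (h' ▸ ⟨0, by simp⟩)
          obtain ⟨r, hr⟩ := hsq
          apply hi
          refine ⟨r * ρ⁻¹, ?_⟩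
          have hρi : ρ * ρ⁻¹ = 1 := mul_inv_cancel₀ hρ0
          linear_combination (-(ρ⁻¹ ^ 2)) * hr - (ρ * ρ⁻¹ + 1) * hρi
        rcases hem with hsq | hsq
        · obtain ⟨yy, hyy⟩ := hsq
          obtain ⟨γ, hγ⟩ := curve_from_sqrt h2F (s := s₂) (y := yy) (by linear_combination -hyy)
          refine ⟨s₂, γ, hγ, ?_⟩
          intro h
          have h1w : (w - 1) * (w + 1) = 0 := by
            rw [hs2def] at h
            linear_combination (-(w ^ 2)) * h + (w * w⁻¹ + 1) * hiw - w ^ 2 * h3F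
          rcases mul_eq_zero.mp h1w with h' | h'
          · exact hw1 h'
          · exact hwm1 h'
        · obtain ⟨yy, hyy⟩ := hsq
          obtain ⟨γ, hγ⟩ := curve_from_sqrt h2F (s := s₃) (y := yy) (by linear_combination -hyy)
          refine ⟨s₃, γ, hγ, ?_⟩
          intro h
          apply hw1
          rw [hs3def] at h
          linear_combination (2 * (w + 1)) ^ 2 * h
            - w ^ 2 * ((2 * (w + 1)) * (2 * (w + 1))⁻¹ + 1) * hiq
            + (5 * w ^ 2 + 11 * w + 5) * h3F
    · by_cases h5F : (5 : F) = 0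
      · -- characteristic 5
        refine ⟨1, 3, by linear_combination h5F, ?_⟩
        intro h
        apply h3F
        linear_combination -h
      · -- characteristic not 2, 3, 5
        have h8 : (8 : F) ≠ 0 := by
          intro h
          apply h2F
          have : (2 : F) ^ 3 = 0 := by linear_combination h
          exact pow_eq_zero_iff (n := 3) (by norm_num) |>.mp this
        by_cases hsq8 : IsSquare (8 : F)
        · obtain ⟨y, hy⟩ := hsq8
          obtain ⟨γ, hγ⟩ := curve_from_sqrt h2F (s := 0) (y := y) (by linear_combination -hy)
          refine ⟨0, γ, hγ, ?_⟩
          intro h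
          apply h2F
          have : (2 : F) ^ 2 = 0 := by linear_combination -h
          exact pow_eq_zero_iff (n := 2) (by norm_num) |>.mp this
        · by_cases hsq5 : IsSquare (5 : F)
          · obtain ⟨y, hy⟩ := hsq5
            obtain ⟨γ, hγ⟩ := curve_from_sqrt h2F (s := -3) (y := y)
              (by linear_combination -hy)
            refine ⟨-3, γ, hγ, ?_⟩
            intro h
            apply h5F
            linear_combination h
          · have hsq40 := nonsq_mul_nonsq hsq8 hsq5
            obtain ⟨y₀, hy₀⟩ := hsq40
            have hi3 : (3 : F) * (3 : F)⁻¹ = 1 := mul_inv_cancel₀ h3F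
            set i3 : F := (3 : F)⁻¹ with hi3def
            obtain ⟨γ, hγ⟩ := curve_from_sqrt h2F (s := -(2 * i3)) (y := 2 * y₀ * i3 ^ 2)
              (by linear_combination (-(4 * i3 ^ 4)) * hy₀
                + (48 * i3 ^ 3 + 16 * i3 ^ 2 + 16 * i3 + 8) * hi3)
            refine ⟨-(2 * i3), γ, hγ, ?_⟩
            intro h
            have h32 : (32 : F) = 0 := by
              linear_combination (-9 : F) * h + (4 * (3 * i3 + 1)) * hi3
            apply h2F
            have : (2 : F) ^ 5 = 0 := by linear_combination h32
            exact pow_eq_zero_iff (n := 5) (by norm_num) |>.mp this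

/-- The main construction: from a curve point, build the fixed point data. -/
private lemma main_of_point {s γ : F}
    (hc : γ ^ 2 - s ^ 2 * γ + 2 * s ^ 2 - s - 2 = 0) (hs : s ^ 2 - 4 ≠ 0) :
    ∃ x y u : Matrix.SpecialLinearGroup (Fin 2) F,
      u ≠ 1 ∧ ⁅x * u * x⁻¹, y * u * y⁻¹⁆ = u := by
  classical
  -- realize a pair of matrices with traces s, s and product trace γ
  obtain ⟨x, y, z, h1, h2⟩ : ∃ x y z : F, x * (s - x) - y * z = 1 ∧ s * x + y - z = γ := by
    by_cases h2F : (2 : F) = 0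
    · obtain ⟨x, hx⟩ := sq_surj_of_char_two h2F γ
      refine ⟨x, 1, s * x - γ - 1, ?_, ?_⟩
      · linear_combination -hx
      · linear_combination h2F
    · have hodd := odd_card_of_two_ne_zero h2F
      have hb : (4 - s ^ 2 : F) ≠ 0 := by
        intro h; apply hs; linear_combination -h
      obtain ⟨w, yv, hwy⟩ := exists_conic hodd (b := 4 - s ^ 2)
        (c := 2 * s ^ 2 - 4 * γ) (d := 4 - s ^ 2) hb
      have hx2 : 2 * ((s * (1 - yv) + w) / 2) = s * (1 - yv) + w := by field_simp
      set xv : F := (s * (1 - yv) + w) / 2 with hxv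
      refine ⟨xv, yv, s * xv + yv - γ, ?_, by ring⟩
      have key : (2 : F) * ((2 : F) * (xv * (s - xv) - yv * (s * xv + yv - γ))) =
          (2 : F) * ((2 : F) * 1) := by
        linear_combination (-(2 * xv + (s * (1 - yv) + w)) + 2 * s - 2 * s * yv) * hx2 - hwy
      exact mul_left_cancel₀ h2F (mul_left_cancel₀ h2F key)
  have hdeta : (!![s, -1; 1, 0] : Matrix (Fin 2) (Fin 2) F).det = 1 := by
    rw [Matrix.det_fin_two_of]; ring
  have hdetb : (!![x, y; z, s - x] : Matrix (Fin 2) (Fin 2) F).det = 1 := by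
    rw [Matrix.det_fin_two_of]; linear_combination h1
  set a : Matrix.SpecialLinearGroup (Fin 2) F := ⟨_, hdeta⟩ with haa
  set b : Matrix.SpecialLinearGroup (Fin 2) F := ⟨_, hdetb⟩ with hbb
  have htra : ((a : Matrix (Fin 2) (Fin 2) F)).trace = s := by
    show (!![s, -1; 1, 0] : Matrix (Fin 2) (Fin 2) F).trace = s
    rw [Matrix.trace_fin_two_of]; ring
  have htrb : ((b : Matrix (Fin 2) (Fin 2) F)).trace = s := by
    show (!![x, y; z, s - x] : Matrix (Fin 2) (Fin 2) F).trace = s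
    rw [Matrix.trace_fin_two_of]; ring
  have hu1 : ((⁅a, b⁆ : Matrix.SpecialLinearGroup (Fin 2) F) : Matrix (Fin 2) (Fin 2) F) =
      !![s, -1; 1, 0] * !![x, y; z, s - x] *
        (!![s, -1; 1, 0] : Matrix (Fin 2) (Fin 2) F).adjugate *
        (!![x, y; z, s - x] : Matrix (Fin 2) (Fin 2) F).adjugate := rfl
  have htru : ((⁅a, b⁆ : Matrix.SpecialLinearGroup (Fin 2) F) :
      Matrix (Fin 2) (Fin 2) F).trace = s := by
    rw [hu1, Matrix.adjugate_fin_two_of, Matrix.adjugate_fin_two_of,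
      Matrix.mul_fin_two, Matrix.mul_fin_two, Matrix.mul_fin_two, Matrix.trace_fin_two_of]
    linear_combination (s * x + y - z + γ - s ^ 2) * h2 + hc + (s ^ 2 - 2) * h1
  have hne : (⁅a, b⁆ : Matrix.SpecialLinearGroup (Fin 2) F) ≠ 1 := by
    intro h
    apply hs
    have htr1 : ((⁅a, b⁆ : Matrix.SpecialLinearGroup (Fin 2) F) :
        Matrix (Fin 2) (Fin 2) F).trace = 2 := by
      rw [h]
      show (1 : Matrix (Fin 2) (Fin 2) F).trace = 2
      rw [Matrix.trace_one]
      simp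
    have hs2 : s = 2 := by rw [← htru, htr1]
    rw [hs2]; ring
  obtain ⟨Pa, hPa⟩ := conj_to_Cmat a htra hs
  obtain ⟨Pb, hPb⟩ := conj_to_Cmat b htrb hs
  obtain ⟨Pu, hPu⟩ := conj_to_Cmat ⁅a, b⁆ htru hs
  refine ⟨Pa * Pu⁻¹, Pb * Pu⁻¹, ⁅a, b⁆, hne, ?_⟩
  have hxa : (Pa * Pu⁻¹) * ⁅a, b⁆ * (Pa * Pu⁻¹)⁻¹ = a := by
    rw [hPu]
    conv_rhs => rw [hPa]
    group
  have hyb : (Pb * Pu⁻¹) * ⁅a, b⁆ * (Pb * Pu⁻¹)⁻¹ = b := by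
    rw [hPu]
    conv_rhs => rw [hPb]
    group
  rw [hxa, hyb]

end Stmt0Aux

/-- For every finite field `F` with more than 3 elements (i.e. `q > 3` a prime power),
the verbal dynamical system `(x, y, u) ↦ (x, y, [x u x⁻¹, y u y⁻¹])` on `SL(2, F_q)³`
has a fixed point outside the forbidden set `G × G × {1}`: there are `x, y, u` with
`u ≠ 1` and `[x u x⁻¹, y u y⁻¹] = u`. -/
theorem stmt0 (F : Type*) [Field F] [Fintype F] (hq : 3 < Fintype.card F) :
    ∃ x y u : Matrix.SpecialLinearGroup (Fin 2) F,
      u ≠ 1 ∧ ⁅x * u * x⁻¹, y * u * y⁻¹⁆ = u := by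
  obtain ⟨s, γ, hc, hs⟩ := Stmt0Aux.exists_point hq
  exact Stmt0Aux.main_of_point hc hs
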